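/- Over a field of characteristic zero, the map sending a derivation f of the free Lie algebra L on the symplectic space V with f(ω)=0 to its restriction f₁ = f|_V ∈ Hom(V, L) ≅ V* ⊗ L ≅ V ⊗ L (using the symplectic form to identify V* with V) is injective, and its image lies in the kernel h of the bracketing map V ⊗ L → L. Conversely, every element of h arises from a unique derivation killing ω, giving a linear isomorphism ℓ ≅ h. -/

import Mathlib

open FreeLieAlgebra TensorProduct

/-- `ω = Σᵢ [pᵢ, qᵢ]` in the free Lie algebra on the symplectic basis. -/
noncomputable def omega7 (n : ℕ) : FreeLieAlgebra ℚ (Fin n ⊕ Fin n) :=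
  ∑ i : Fin n, ⁅of ℚ ((Sum.inl i : Fin n ⊕ Fin n)), of ℚ (Sum.inr i)⁆

/-- Evaluation of a derivation at `ω`, as a linear map; its kernel is `ℓ`, the space of
derivations of the free Lie algebra killing `ω`. -/
noncomputable def evalOmega (n : ℕ) :
    LieDerivation ℚ (FreeLieAlgebra ℚ (Fin n ⊕ Fin n)) (FreeLieAlgebra ℚ (Fin n ⊕ Fin n))
      →ₗ[ℚ] FreeLieAlgebra ℚ (Fin n ⊕ Fin n) where
  toFun f := f (omega7 n)
  map_add' f g := by simp
  map_smul' c f := by simp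

/-- The linear inclusion of the symplectic vector space `V = ℚ^{Fin n ⊕ Fin n}` into the
free Lie algebra on its basis. -/
noncomputable def iotaV (n : ℕ) :
    ((Fin n ⊕ Fin n) → ℚ) →ₗ[ℚ] FreeLieAlgebra ℚ (Fin n ⊕ Fin n) where
  toFun v := ∑ s : Fin n ⊕ Fin n, v s • of ℚ s
  map_add' u v := by simp [add_smul, Finset.sum_add_distrib]
  map_smul' c v := by simp [smul_smul, Finset.smul_sum]

attribute [local instance] LieRing.ofAssociativeRing

/-- The bracketing map `V ⊗ L → L`, `v ⊗ w ↦ [v, w]`; its kernel is `h`. -/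
noncomputable def beta7 (n : ℕ) :
    (((Fin n ⊕ Fin n) → ℚ) ⊗[ℚ] FreeLieAlgebra ℚ (Fin n ⊕ Fin n))
      →ₗ[ℚ] FreeLieAlgebra ℚ (Fin n ⊕ Fin n) :=
  TensorProduct.lift
    ((LieAlgebra.ad ℚ (FreeLieAlgebra ℚ (Fin n ⊕ Fin n))).toLinearMap.comp (iotaV n))

section SD
variable (A : Type*) [LieRing A] [LieAlgebra ℚ A]
def Sd := A × A
instance : AddCommGroup (Sd A) := inferInstanceAs (AddCommGroup (A × A))
instance : Module ℚ (Sd A) := inferInstanceAs (Module ℚ (A × A))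
variable {A}
instance : LieRing (Sd A) where
  bracket x y := (⁅x.1, y.1⁆, ⁅x.1, y.2⁆ + ⁅x.2, y.1⁆)
  add_lie x y z := by
    refine Prod.ext ?_ ?_
    · show ⁅x.1 + y.1, z.1⁆ = ⁅x.1, z.1⁆ + ⁅y.1, z.1⁆
      simp
    · show ⁅x.1 + y.1, z.2⁆ + ⁅x.2 + y.2, z.1⁆
        = (⁅x.1, z.2⁆ + ⁅x.2, z.1⁆) + (⁅y.1, z.2⁆ + ⁅y.2, z.1⁆)
      simp [add_lie]; abel
  lie_add x y z := by
    refine Prod.ext ?_ ?_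
    · show ⁅x.1, y.1 + z.1⁆ = ⁅x.1, y.1⁆ + ⁅x.1, z.1⁆
      simp
    · show ⁅x.1, y.2 + z.2⁆ + ⁅x.2, y.1 + z.1⁆
        = (⁅x.1, y.2⁆ + ⁅x.2, y.1⁆) + (⁅x.1, z.2⁆ + ⁅x.2, z.1⁆)
      simp [lie_add]; abel
  lie_self x := by
    refine Prod.ext ?_ ?_
    · show ⁅x.1, x.1⁆ = 0
      simp
    · show ⁅x.1, x.2⁆ + ⁅x.2, x.1⁆ = 0
      rw [← lie_skew x.1 x.2]; abel
  leibniz_lie x y z := by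
    refine Prod.ext ?_ ?_
    · show ⁅x.1, ⁅y.1, z.1⁆⁆ = ⁅⁅x.1, y.1⁆, z.1⁆ + ⁅y.1, ⁅x.1, z.1⁆⁆
      exact leibniz_lie _ _ _
    · show ⁅x.1, ⁅y.1, z.2⁆ + ⁅y.2, z.1⁆⁆ + ⁅x.2, ⁅y.1, z.1⁆⁆
        = (⁅⁅x.1, y.1⁆, z.2⁆ + ⁅⁅x.1, y.2⁆ + ⁅x.2, y.1⁆, z.1⁆)
          + (⁅y.1, ⁅x.1, z.2⁆ + ⁅x.2, z.1⁆⁆ + ⁅y.2, ⁅x.1, z.1⁆⁆)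
      simp only [lie_add, add_lie, lie_lie]
      abel
instance : LieAlgebra ℚ (Sd A) where
  lie_smul t x y := by
    refine Prod.ext ?_ ?_
    · show ⁅x.1, t • y.1⁆ = t • ⁅x.1, y.1⁆
      simp
    · show ⁅x.1, t • y.2⁆ + ⁅x.2, t • y.1⁆ = t • (⁅x.1, y.2⁆ + ⁅x.2, y.1⁆)
      simp
omit [LieAlgebra ℚ A] in
@[simp] lemma Sd.bracket_fst (x y : Sd A) : ⁅x, y⁆.1 = ⁅x.1, y.1⁆ := rfl
omit [LieAlgebra ℚ A] in
@[simp] lemma Sd.bracket_snd (x y : Sd A) : ⁅x, y⁆.2 = ⁅x.1, y.2⁆ + ⁅x.2, y.1⁆ := rfl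
variable (A) in
def Sd.fstHom : Sd A →ₗ⁅ℚ⁆ A where
  toFun x := x.1
  map_add' _ _ := rfl
  map_smul' _ _ := rfl
  map_lie' := rfl
variable (A) in
def Sd.sndLinear : Sd A →ₗ[ℚ] A where
  toFun x := x.2
  map_add' _ _ := rfl
  map_smul' _ _ := rfl
end SD

section Der
variable {X : Type*}

lemma lieSpan_range_of_eq_top :
    LieSubalgebra.lieSpan ℚ (FreeLieAlgebra ℚ X) (Set.range (of ℚ)) = ⊤ := by
  rw [eq_top_iff]
  rintro x -
  set K := LieSubalgebra.lieSpan ℚ (FreeLieAlgebra ℚ X) (Set.range (of ℚ)) with hK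
  let F : FreeLieAlgebra ℚ X →ₗ⁅ℚ⁆ K :=
    lift ℚ (fun s => ⟨of ℚ s, LieSubalgebra.subset_lieSpan ⟨s, rfl⟩⟩)
  have h : K.incl.comp F = LieHom.id := by
    apply FreeLieAlgebra.hom_ext
    intro s
    simp [F, lift_of_apply]
  have hx : K.incl (F x) = x := by
    have := LieHom.congr_fun h x
    simpa using this
  exact hx ▸ (F x).2

/-- two derivations of the free Lie algebra agreeing on generators are equal -/
lemma der_ext {D1 D2 : LieDerivation ℚ (FreeLieAlgebra ℚ X) (FreeLieAlgebra ℚ X)}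
    (h : ∀ s, D1 (of ℚ s) = D2 (of ℚ s)) : D1 = D2 := by
  refine LieDerivation.ext_of_lieSpan_eq_top _ lieSpan_range_of_eq_top ?_
  rintro _ ⟨s, rfl⟩
  exact h s

/-- The Lie hom into the semidirect product determined by generator values. -/
noncomputable def phiSd (g : X → FreeLieAlgebra ℚ X) :
    FreeLieAlgebra ℚ X →ₗ⁅ℚ⁆ Sd (FreeLieAlgebra ℚ X) :=
  lift ℚ (fun s => (of ℚ s, g s))

lemma phiSd_fst (g : X → FreeLieAlgebra ℚ X) (x : FreeLieAlgebra ℚ X) :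
    (phiSd g x).1 = x := by
  have h : (Sd.fstHom (FreeLieAlgebra ℚ X)).comp (phiSd g) = LieHom.id := by
    apply FreeLieAlgebra.hom_ext
    intro s
    simp [phiSd, lift_of_apply, Sd.fstHom]
    exact congrArg (Sd.fstHom (FreeLieAlgebra ℚ X))
      (lift_of_apply _ _ : phiSd g (of ℚ s) = ((of ℚ s, g s) : Sd (FreeLieAlgebra ℚ X)))
  exact LieHom.congr_fun h x

/-- The derivation of the free Lie algebra with prescribed values on generators. -/
noncomputable def derOfGen (g : X → FreeLieAlgebra ℚ X) :
    LieDerivation ℚ (FreeLieAlgebra ℚ X) (FreeLieAlgebra ℚ X) where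
  toLinearMap := (Sd.sndLinear (FreeLieAlgebra ℚ X)).comp (phiSd g).toLinearMap
  leibniz' a b := by
    simp only [LinearMap.comp_apply, LieHom.coe_toLinearMap, LieHom.map_lie]
    show ⁅phiSd g a, phiSd g b⁆.2 = ⁅a, (phiSd g b).2⁆ - ⁅b, (phiSd g a).2⁆
    rw [Sd.bracket_snd, phiSd_fst, phiSd_fst, ← lie_skew b, sub_neg_eq_add]

@[simp] lemma derOfGen_of (g : X → FreeLieAlgebra ℚ X) (s : X) :
    derOfGen g (of ℚ s) = g s := by
  show ((phiSd g) (of ℚ s)).2 = g s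
  exact congrArg (fun p : Sd (FreeLieAlgebra ℚ X) => p.2)
    (lift_of_apply _ _ : phiSd g (of ℚ s) = ((of ℚ s, g s) : Sd (FreeLieAlgebra ℚ X)))

end Der

open TensorProduct

section Main
variable (n : ℕ)

local notation "L" => FreeLieAlgebra ℚ (Fin n ⊕ Fin n)
local notation "V" => (Fin n ⊕ Fin n) → ℚ

lemma iotaV_single (s : Fin n ⊕ Fin n) : iotaV n (Pi.single s (1 : ℚ)) = of ℚ s := by
  show (∑ t : Fin n ⊕ Fin n, (Pi.single s (1 : ℚ) : (Fin n ⊕ Fin n) → ℚ) t • of ℚ t) = of ℚ s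
  rw [Finset.sum_eq_single s (fun b _ hb => by simp [Pi.single_apply, hb]) (by simp)]
  simp

lemma beta7_tmul (v : V) (x : L) : beta7 n (v ⊗ₜ x) = ⁅iotaV n v, x⁆ := rfl

/-- the map `f ↦ Σᵢ (pᵢ ⊗ f(qᵢ) − qᵢ ⊗ f(pᵢ))` -/
noncomputable def Phi7 : LieDerivation ℚ L L →ₗ[ℚ] V ⊗[ℚ] L where
  toFun f := ∑ i : Fin n,
      ((Pi.single (Sum.inl i : Fin n ⊕ Fin n) (1 : ℚ)) ⊗ₜ[ℚ] f (of ℚ (Sum.inr i))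
        - (Pi.single (Sum.inr i : Fin n ⊕ Fin n) (1 : ℚ)) ⊗ₜ[ℚ] f (of ℚ (Sum.inl i)))
  map_add' f g := by
    rw [← Finset.sum_add_distrib]
    refine Finset.sum_congr rfl fun i _ => ?_
    rw [LieDerivation.coe_add, Pi.add_apply, Pi.add_apply, tmul_add, tmul_add]
    abel
  map_smul' c f := by
    rw [RingHom.id_apply, Finset.smul_sum]
    apply Finset.sum_congr rfl
    intro i _
    rw [LieDerivation.coe_smul, Pi.smul_apply, Pi.smul_apply, tmul_smul, tmul_smul, smul_sub]

/-- coordinate maps on `V ⊗ L` -/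
noncomputable def coordT (s : Fin n ⊕ Fin n) : V ⊗[ℚ] L →ₗ[ℚ] L :=
  TensorProduct.lift ((LinearMap.lsmul ℚ L).comp (LinearMap.proj s))

lemma coordT_tmul (s : Fin n ⊕ Fin n) (v : V) (x : L) :
    coordT n s (v ⊗ₜ x) = v s • x := rfl

lemma sum_single_tmul_coordT (t : V ⊗[ℚ] L) :
    ∑ s : Fin n ⊕ Fin n, (Pi.single s (1 : ℚ)) ⊗ₜ[ℚ] coordT n s t = t := by
  induction t using TensorProduct.induction_on with
  | zero => simp
  | tmul v x =>
      have : ∀ s : Fin n ⊕ Fin n,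
          (Pi.single s (1:ℚ) : V) ⊗ₜ[ℚ] coordT n s (v ⊗ₜ x) = (Pi.single s (v s) : V) ⊗ₜ[ℚ] x := by
        intro s
        rw [coordT_tmul, tmul_smul, smul_tmul', ← Pi.single_smul, smul_eq_mul, mul_one]
      rw [Finset.sum_congr rfl fun s _ => this s, ← sum_tmul]
      congr 1
      exact Finset.univ_sum_single v
  | add a b ha hb => simp only [map_add, tmul_add, Finset.sum_add_distrib, ha, hb]

/-- the inverse map -/
noncomputable def Psi7 : V ⊗[ℚ] L →ₗ[ℚ] LieDerivation ℚ L L where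
  toFun t := derOfGen (Sum.elim (fun i => -(coordT n (Sum.inr i) t))
      (fun i => coordT n (Sum.inl i) t))
  map_add' a b := by
    apply der_ext
    rintro (i | i) <;> simp <;> abel
  map_smul' c a := by
    apply der_ext
    rintro (i | i) <;> simp

lemma Phi7_Psi7 (t : V ⊗[ℚ] L) : Phi7 n (Psi7 n t) = t := by
  show (∑ i : Fin n, _) = t
  have h : ∀ i : Fin n,
      ((Pi.single (Sum.inl i : Fin n ⊕ Fin n) (1 : ℚ) : V) ⊗ₜ[ℚ] (Psi7 n t) (of ℚ (Sum.inr i))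
        - (Pi.single (Sum.inr i : Fin n ⊕ Fin n) (1 : ℚ) : V) ⊗ₜ[ℚ] (Psi7 n t) (of ℚ (Sum.inl i)))
      = ((Pi.single (Sum.inl i : Fin n ⊕ Fin n) (1 : ℚ) : V) ⊗ₜ[ℚ] coordT n (Sum.inl i) t
        + (Pi.single (Sum.inr i : Fin n ⊕ Fin n) (1 : ℚ) : V) ⊗ₜ[ℚ] coordT n (Sum.inr i) t) := by
    intro i
    simp [Psi7, tmul_neg, sub_neg_eq_add]
  rw [Finset.sum_congr rfl fun i _ => h i, Finset.sum_add_distrib]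
  have := sum_single_tmul_coordT n t
  rwa [Fintype.sum_sum_type] at this

lemma coordT_Phi7 (f : LieDerivation ℚ L L) (s : Fin n ⊕ Fin n) :
    coordT n s (Phi7 n f) = Sum.elim (fun i => f (of ℚ (Sum.inr i)))
      (fun i => -(f (of ℚ (Sum.inl i)))) s := by
  show coordT n s (∑ i : Fin n, _) = _
  rw [map_sum]
  rcases s with i | i <;>
  · simp [coordT_tmul, Pi.single_apply, Sum.inl.injEq, Sum.inr.injEq, sub_eq_add_neg,
      Finset.sum_add_distrib, Finset.sum_ite_eq', ite_smul, apply_ite]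

lemma Psi7_Phi7 (f : LieDerivation ℚ L L) : Psi7 n (Phi7 n f) = f := by
  apply der_ext
  rintro (i | i) <;> simp [Psi7, coordT_Phi7]

lemma beta7_Phi7 (f : LieDerivation ℚ L L) : beta7 n (Phi7 n f) = evalOmega n f := by
  show beta7 n (∑ i : Fin n, _) = f (omega7 n)
  rw [map_sum, omega7, map_sum]
  refine Finset.sum_congr rfl fun i _ => ?_
  rw [map_sub, beta7_tmul, beta7_tmul, iotaV_single, iotaV_single,
    LieDerivation.apply_lie_eq_add, ← lie_skew (of ℚ (Sum.inr i)) (f (of ℚ (Sum.inl i)))]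
  abel

theorem stmt7' :
    ∃ e : LinearMap.ker (evalOmega n) ≃ₗ[ℚ] LinearMap.ker (beta7 n),
      ∀ f : LinearMap.ker (evalOmega n),
        (e f : ((Fin n ⊕ Fin n) → ℚ) ⊗[ℚ] FreeLieAlgebra ℚ (Fin n ⊕ Fin n))
          = ∑ i : Fin n,
              ((Pi.single (Sum.inl i : Fin n ⊕ Fin n) (1 : ℚ)) ⊗ₜ[ℚ]
                  (f : LieDerivation ℚ (FreeLieAlgebra ℚ (Fin n ⊕ Fin n))
                    (FreeLieAlgebra ℚ (Fin n ⊕ Fin n))) (of ℚ (Sum.inr i))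
                - (Pi.single (Sum.inr i : Fin n ⊕ Fin n) (1 : ℚ)) ⊗ₜ[ℚ]
                  (f : LieDerivation ℚ (FreeLieAlgebra ℚ (Fin n ⊕ Fin n))
                    (FreeLieAlgebra ℚ (Fin n ⊕ Fin n))) (of ℚ (Sum.inl i))) := by
  refine ⟨LinearEquiv.ofLinear
    (LinearMap.codRestrict (LinearMap.ker (beta7 n))
      (LinearMap.comp (Phi7 n) (Submodule.subtype (LinearMap.ker (evalOmega n))))
      (fun f => by
        simp only [LinearMap.mem_ker, LinearMap.comp_apply, Submodule.subtype_apply]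
        rw [beta7_Phi7]
        exact f.2))
    (LinearMap.codRestrict (LinearMap.ker (evalOmega n))
      (LinearMap.comp (Psi7 n) (Submodule.subtype (LinearMap.ker (beta7 n))))
      (fun t => by
        simp only [LinearMap.mem_ker, LinearMap.comp_apply, Submodule.subtype_apply]
        rw [← beta7_Phi7, Phi7_Psi7]
        exact t.2))
    ?_ ?_, fun f => rfl⟩
  · refine LinearMap.ext fun t => Subtype.ext ?_
    simpa using Phi7_Psi7 n t.1
  · refine LinearMap.ext fun f => Subtype.ext ?_
    simpa using Psi7_Phi7 n f.1

end Main

/-- Over `ℚ` (characteristic zero), restricting a derivation `f` killing `ω`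
to `V`, viewed in `Hom(V,L) ≅ V* ⊗ L ≅ V ⊗ L` via the symplectic form, gives an injection
into the kernel `h` of the bracketing map `V ⊗ L → L`, and every element of `h` arises from
a unique such derivation: there is a linear isomorphism `ℓ ≅ h`, sending `f` to
`Σᵢ (pᵢ ⊗ f(qᵢ) - qᵢ ⊗ f(pᵢ))`. -/
theorem stmt7 (n : ℕ) :
    ∃ e : LinearMap.ker (evalOmega n) ≃ₗ[ℚ] LinearMap.ker (beta7 n),
      ∀ f : LinearMap.ker (evalOmega n),
        (e f : ((Fin n ⊕ Fin n) → ℚ) ⊗[ℚ] FreeLieAlgebra ℚ (Fin n ⊕ Fin n))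
          = ∑ i : Fin n,
              ((Pi.single (Sum.inl i : Fin n ⊕ Fin n) (1 : ℚ)) ⊗ₜ[ℚ]
                  (f : LieDerivation ℚ (FreeLieAlgebra ℚ (Fin n ⊕ Fin n))
                    (FreeLieAlgebra ℚ (Fin n ⊕ Fin n))) (of ℚ (Sum.inr i))
                - (Pi.single (Sum.inr i : Fin n ⊕ Fin n) (1 : ℚ)) ⊗ₜ[ℚ]
                  (f : LieDerivation ℚ (FreeLieAlgebra ℚ (Fin n ⊕ Fin n))
                    (FreeLieAlgebra ℚ (Fin n ⊕ Fin n))) (of ℚ (Sum.inl i))) := by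
  exact stmt7' n
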